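/- Let X ⊂ ℝ^d be finite, let f : ℝ^d → ℝ^m be a JLT on X ∪ (X − X) in the sense that |‖f(u) − f(v)‖² − ‖u − v‖²| ≤ ε‖u − v‖² for all u, v ∈ X, with ε ∈ (0,1). For any partition X_1, …, X_k of X, the k-means cost of the partition computed from the embedded points {f(x) : x ∈ X_i} (with centers at partition means) lies within a multiplicative factor [1 − ε, 1 + ε] of the k-means cost of the partition X_1, …, X_k in ℝ^d. -/

import Mathlib

lemma kmeans_identity {α : Type*} {E : Type*} [NormedAddCommGroup E]
    [InnerProductSpace ℝ E] (S : Finset α) (hS : S.Nonempty) (g : α → E) :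
    ∑ x ∈ S, ‖g x - (S.card : ℝ)⁻¹ • ∑ y ∈ S, g y‖ ^ 2
      = (2 * S.card : ℝ)⁻¹ * ∑ x ∈ S, ∑ y ∈ S, ‖g x - g y‖ ^ 2 := by
  have hn : (0:ℝ) < S.card := by exact_mod_cast Finset.card_pos.mpr hS
  set s : E := ∑ y ∈ S, g y with hs
  have hsum : ∑ x ∈ S, inner ℝ (g x) s = (‖s‖:ℝ) ^ 2 := by
    rw [← sum_inner, hs, ← real_inner_self_eq_norm_sq]
  have expand : ∀ a b : E, ‖a - b‖ ^ 2 = ‖a‖ ^ 2 - 2 * inner ℝ a b + ‖b‖ ^ 2 := by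
    intro a b
    rw [← real_inner_self_eq_norm_sq, ← real_inner_self_eq_norm_sq,
      ← real_inner_self_eq_norm_sq, inner_sub_sub_self, real_inner_comm b a]
    ring
  have lhs_eq : ∑ x ∈ S, ‖g x - (S.card : ℝ)⁻¹ • s‖ ^ 2
      = (∑ x ∈ S, ‖g x‖ ^ 2) - (S.card : ℝ)⁻¹ * ‖s‖ ^ 2 := by
    have : ∀ x ∈ S, ‖g x - (S.card : ℝ)⁻¹ • s‖ ^ 2
        = ‖g x‖ ^ 2 - 2 * (S.card : ℝ)⁻¹ * inner ℝ (g x) s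
          + (S.card : ℝ)⁻¹ ^ 2 * ‖s‖ ^ 2 := by
      intro x _
      rw [expand, real_inner_smul_right, norm_smul]
      simp [abs_of_pos (inv_pos.mpr hn)]
      ring
    rw [Finset.sum_congr rfl this]
    rw [Finset.sum_add_distrib, Finset.sum_sub_distrib, ← Finset.mul_sum, Finset.sum_const,
      mul_assoc]
    rw [hsum]
    field_simp
    have h1 : (S.card : ℝ) ^ 2 * (S.card : ℝ)⁻¹ ^ 2 = 1 := by
      rw [← mul_pow, mul_inv_cancel₀ hn.ne', one_pow]
    linear_combination ‖s‖ ^ 2 * h1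
  have rhs_eq : ∑ x ∈ S, ∑ y ∈ S, ‖g x - g y‖ ^ 2
      = 2 * S.card * (∑ x ∈ S, ‖g x‖ ^ 2) - 2 * ‖s‖ ^ 2 := by
    have : ∀ x ∈ S, ∑ y ∈ S, ‖g x - g y‖ ^ 2
        = S.card * ‖g x‖ ^ 2 - 2 * inner ℝ (g x) s + ∑ y ∈ S, ‖g y‖ ^ 2 := by
      intro x _
      rw [Finset.sum_congr rfl (fun y _ => expand (g x) (g y))]
      rw [Finset.sum_add_distrib, Finset.sum_sub_distrib, Finset.sum_const, ← Finset.mul_sum,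
        inner_sum]
      simp [mul_comm]
    rw [Finset.sum_congr rfl this, Finset.sum_add_distrib, Finset.sum_sub_distrib,
      ← Finset.mul_sum, ← Finset.mul_sum, Finset.sum_const, hsum]
    simp
    ring
  rw [lhs_eq, rhs_eq]
  field_simp

theorem jlt_preserves_kmeans_cost (d m k : ℕ) (ε : ℝ) (hε : ε ∈ Set.Ioo (0:ℝ) 1)
    (X : Finset (EuclideanSpace ℝ (Fin d)))
    (f : EuclideanSpace ℝ (Fin d) →ₗ[ℝ] EuclideanSpace ℝ (Fin m))
    (hf : ∀ u ∈ X, ∀ v ∈ X, |‖f u - f v‖ ^ 2 - ‖u - v‖ ^ 2| ≤ ε * ‖u - v‖ ^ 2)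
    (P : Fin k → Finset (EuclideanSpace ℝ (Fin d)))
    (hPsub : ∀ i, P i ⊆ X) (hPne : ∀ i, (P i).Nonempty)
    (hPdisj : ∀ i j, i ≠ j → Disjoint (P i) (P j))
    (hPcover : ∀ x ∈ X, ∃ i, x ∈ P i) :
    (1 - ε) * (∑ i, ∑ x ∈ P i, ‖x - ((P i).card : ℝ)⁻¹ • ∑ y ∈ P i, y‖ ^ 2)
        ≤ (∑ i, ∑ x ∈ P i, ‖f x - ((P i).card : ℝ)⁻¹ • ∑ y ∈ P i, f y‖ ^ 2)
      ∧ (∑ i, ∑ x ∈ P i, ‖f x - ((P i).card : ℝ)⁻¹ • ∑ y ∈ P i, f y‖ ^ 2)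
        ≤ (1 + ε) * (∑ i, ∑ x ∈ P i, ‖x - ((P i).card : ℝ)⁻¹ • ∑ y ∈ P i, y‖ ^ 2) := by
  obtain ⟨hε0, hε1⟩ := hε
  have key : ∀ i : Fin k,
      (1 - ε) * (∑ x ∈ P i, ‖x - ((P i).card : ℝ)⁻¹ • ∑ y ∈ P i, y‖ ^ 2)
          ≤ (∑ x ∈ P i, ‖f x - ((P i).card : ℝ)⁻¹ • ∑ y ∈ P i, f y‖ ^ 2)
        ∧ (∑ x ∈ P i, ‖f x - ((P i).card : ℝ)⁻¹ • ∑ y ∈ P i, f y‖ ^ 2)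
          ≤ (1 + ε) * (∑ x ∈ P i, ‖x - ((P i).card : ℝ)⁻¹ • ∑ y ∈ P i, y‖ ^ 2) := by
    intro i
    rw [kmeans_identity (P i) (hPne i) (fun y => y),
      kmeans_identity (P i) (hPne i) (fun y => f y)]
    have hc : (0:ℝ) ≤ (2 * (P i).card : ℝ)⁻¹ := by positivity
    have hlow : (1 - ε) * ∑ x ∈ P i, ∑ y ∈ P i, ‖x - y‖ ^ 2
        ≤ ∑ x ∈ P i, ∑ y ∈ P i, ‖f x - f y‖ ^ 2 := by
      rw [Finset.mul_sum]
      refine Finset.sum_le_sum fun x hx => ?_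
      rw [Finset.mul_sum]
      refine Finset.sum_le_sum fun y hy => ?_
      have h := abs_le.mp (hf x (hPsub i hx) y (hPsub i hy))
      nlinarith [h.1, h.2]
    have hhigh : ∑ x ∈ P i, ∑ y ∈ P i, ‖f x - f y‖ ^ 2
        ≤ (1 + ε) * ∑ x ∈ P i, ∑ y ∈ P i, ‖x - y‖ ^ 2 := by
      rw [Finset.mul_sum]
      refine Finset.sum_le_sum fun x hx => ?_
      rw [Finset.mul_sum]
      refine Finset.sum_le_sum fun y hy => ?_
      have h := abs_le.mp (hf x (hPsub i hx) y (hPsub i hy))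
      nlinarith [h.1, h.2]
    constructor
    · calc (1 - ε) * ((2 * (P i).card : ℝ)⁻¹ * ∑ x ∈ P i, ∑ y ∈ P i, ‖x - y‖ ^ 2)
          = (2 * (P i).card : ℝ)⁻¹ * ((1 - ε) * ∑ x ∈ P i, ∑ y ∈ P i, ‖x - y‖ ^ 2) := by ring
        _ ≤ _ := mul_le_mul_of_nonneg_left hlow hc
    · calc (2 * (P i).card : ℝ)⁻¹ * ∑ x ∈ P i, ∑ y ∈ P i, ‖f x - f y‖ ^ 2
          ≤ (2 * (P i).card : ℝ)⁻¹ * ((1 + ε) * ∑ x ∈ P i, ∑ y ∈ P i, ‖x - y‖ ^ 2) :=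
            mul_le_mul_of_nonneg_left hhigh hc
        _ = _ := by ring
  constructor
  · rw [Finset.mul_sum]
    exact Finset.sum_le_sum fun i _ => (key i).1
  · rw [Finset.mul_sum]
    exact Finset.sum_le_sum fun i _ => (key i).2
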